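/- Let α : [0,2π] → ℝ² be given by α(t) = (2 sin(t/2) − t cos(t/2), 2 sin(t/2) + (2π − t) cos(t/2)). Then min_{t ∈ [0,2π]} ( α_1(t) + α_2(t) ) = 4. Consequently, for every odd k ∈ ℕ, min_{t ∈ [0,2π]} (1/2)⟨(k+1, k+1), α(t)⟩ = 2k + 2. -/

import Mathlib

open Real

lemma aux_deriv (u : ℝ) :
    HasDerivAt (fun u : ℝ => Real.cos u + u * Real.sin u) (u * Real.cos u) u := by
  have h := (Real.hasDerivAt_cos u).add ((hasDerivAt_id u).mul (Real.hasDerivAt_sin u))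
  have h' : HasDerivAt (fun u : ℝ => Real.cos u + u * Real.sin u)
      (-sin u + (1 * sin u + u * cos u)) u := h
  convert h' using 1
  ring

lemma aux_key (u : ℝ) (hu : |u| ≤ π / 2) : 1 ≤ Real.cos u + u * Real.sin u := by
  wlog h : 0 ≤ u generalizing u
  · push_neg at h
    have := this (-u) (by rwa [abs_neg]) (by linarith)
    simpa [Real.cos_neg, Real.sin_neg] using this
  · have habs : u ≤ π / 2 := (abs_le.mp hu).2
    have hmono : MonotoneOn (fun u : ℝ => Real.cos u + u * Real.sin u)
        (Set.Icc 0 (π / 2)) := by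
      apply monotoneOn_of_deriv_nonneg (convex_Icc _ _)
      · exact Continuous.continuousOn (by continuity)
      · intro x hx
        exact (aux_deriv x).differentiableAt.differentiableWithinAt
      · intro x hx
        rw [interior_Icc] at hx
        rw [(aux_deriv x).deriv]
        have hc : 0 ≤ Real.cos x :=
          Real.cos_nonneg_of_mem_Icc ⟨by linarith [hx.1], le_of_lt hx.2⟩
        exact mul_nonneg hx.1.le hc
    have := hmono (Set.mem_Icc.mpr ⟨le_refl 0, by positivity⟩)
      (Set.mem_Icc.mpr ⟨h, habs⟩) h
    simpa using this

lemma aux_ptwise (t : ℝ) (ht : t ∈ Set.Icc 0 (2 * π)) :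
    4 ≤ 4 * Real.sin (t / 2) + (2 * π - 2 * t) * Real.cos (t / 2) := by
  obtain ⟨ht0, ht2⟩ := ht
  set u := t / 2 - π / 2 with hu
  have habs : |u| ≤ π / 2 := abs_le.mpr ⟨by simp [hu]; linarith, by simp [hu]; linarith⟩
  have hs : Real.sin (t / 2) = Real.cos u := by
    have : t / 2 = u + π / 2 := by rw [hu]; ring
    rw [this, Real.sin_add, Real.sin_pi_div_two, Real.cos_pi_div_two]; ring
  have hc : Real.cos (t / 2) = -Real.sin u := by
    have : t / 2 = u + π / 2 := by rw [hu]; ring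
    rw [this, Real.cos_add, Real.sin_pi_div_two, Real.cos_pi_div_two]; ring
  have key := aux_key u habs
  have ht' : 2 * π - 2 * t = -(4 * u) := by rw [hu]; ring
  rw [hs, hc, ht']
  nlinarith [key]

/-- For the boundary curve of the toric model of the Lagrangian bidisk,
`min (α₁ + α₂) = 4`, and hence for odd `k`, `min (1/2)⟨(k+1,k+1), α⟩ = 2k+2`. -/
theorem stmt_10
    (α₁ α₂ : ℝ → ℝ)
    (hα₁ : α₁ = fun t => 2 * sin (t / 2) - t * cos (t / 2))
    (hα₂ : α₂ = fun t => 2 * sin (t / 2) + (2 * π - t) * cos (t / 2)) :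
    IsLeast ((fun t => α₁ t + α₂ t) '' Set.Icc 0 (2 * π)) 4 ∧
    ∀ k : ℕ, Odd k →
      IsLeast
        ((fun t => 1 / 2 * (((k : ℝ) + 1) * α₁ t + ((k : ℝ) + 1) * α₂ t)) ''
          Set.Icc 0 (2 * π))
        (2 * (k : ℝ) + 2) := by
  subst hα₁ hα₂
  have hsum : ∀ t : ℝ,
      (2 * sin (t / 2) - t * cos (t / 2)) + (2 * sin (t / 2) + (2 * π - t) * cos (t / 2))
        = 4 * Real.sin (t / 2) + (2 * π - 2 * t) * Real.cos (t / 2) := by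
    intro t; ring
  have hπmem : π ∈ Set.Icc 0 (2 * π) :=
    ⟨Real.pi_pos.le, by linarith [Real.pi_pos]⟩
  have hval : 4 * Real.sin (π / 2) + (2 * π - 2 * π) * Real.cos (π / 2) = 4 := by
    rw [Real.sin_pi_div_two]; ring
  constructor
  · constructor
    · exact ⟨π, hπmem, by simp only [hsum]; exact hval⟩
    · rintro x ⟨t, ht, rfl⟩
      simp only [hsum]
      exact aux_ptwise t ht
  · intro k hk
    constructor
    · refine ⟨π, hπmem, ?_⟩
      simp only
      rw [show (2 * sin (π / 2) - π * cos (π / 2)) = 2 by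
          rw [Real.sin_pi_div_two, Real.cos_pi_div_two]; ring,
        show (2 * sin (π / 2) + (2 * π - π) * cos (π / 2)) = 2 by
          rw [Real.sin_pi_div_two, Real.cos_pi_div_two]; ring]
      ring
    · rintro x ⟨t, ht, rfl⟩
      have h := aux_ptwise t ht
      have hk1 : (0 : ℝ) ≤ (k : ℝ) + 1 := by positivity
      simp only
      nlinarith [hsum t]
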